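/- The set unSvar(p), defined recursively by unSvar(p) = ⋃_{j=0}^{i} { γ m δ : γ ∈ unSvar(a₁...a_j), δ ∈ unSvar(a_{j+1}...a_i β) } where p = α m β with m = max(p) and α = a₁...a_i, contains every word λ (with the same letters as p) such that S(λ) = p. That is, if S(λ) = p then λ ∈ unSvar(p). -/

import Mathlib

/-- Pop from the stack (top first) all letters smaller than `x`;
returns (popped output, remaining stack). -/
def stackPop (x : ℕ) : List ℕ → List ℕ × List ℕ
  | [] => ([], [])
  | t :: ts =>
    if t < x then
      let p := stackPop x ts
      (t :: p.1, p.2)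
    else ([], t :: ts)

/-- Run the stack-sorting procedure with the given stack and input;
at the end the (increasing) stack is flushed to the output. -/
def stackRun : List ℕ → List ℕ → List ℕ
  | stack, [] => stack
  | stack, x :: xs =>
    let p := stackPop x stack
    p.1 ++ stackRun (x :: p.2) xs

/-- The stack-sort operator: one pass of a permutation (word) through a stack. -/
def S (w : List ℕ) : List ℕ := stackRun [] w

/-- `w` is (the one-line notation of) a permutation of `{1, …, n}`. -/
def IsPermOf (w : List ℕ) (n : ℕ) : Prop := w.Perm (List.range' 1 n)

/-- The identity permutation `1 2 ⋯ n` in one-line notation. -/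
def idPerm (n : ℕ) : List ℕ := List.range' 1 n

/-- `MemUnSvar lam p` means `lam ∈ unSvar(p)`: the recursive candidate set for
preimages of `p` under stack-sort.  For `p = a₁⋯a_i m β` with `m = max p`,
`unSvar p = ⋃_{j=0}^{i} { γ m δ : γ ∈ unSvar(a₁⋯a_j), δ ∈ unSvar(a_{j+1}⋯a_i β) }`,
and `unSvar(ε) = {ε}`. -/
inductive MemUnSvar : List ℕ → List ℕ → Prop
  | nil : MemUnSvar [] []
  | step (m : ℕ) (a₁ a₂ β γ δ : List ℕ)
      (hmax : ∀ x ∈ a₁ ++ a₂ ++ β, x < m)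
      (hγ : MemUnSvar γ a₁) (hδ : MemUnSvar δ (a₂ ++ β)) :
      MemUnSvar (γ ++ m :: δ) (a₁ ++ a₂ ++ m :: β)

lemma stackPop_append_eq (x : ℕ) : ∀ s : List ℕ, (stackPop x s).1 ++ (stackPop x s).2 = s
  | [] => rfl
  | t :: ts => by
    simp only [stackPop]
    split
    · simpa using stackPop_append_eq x ts
    · rfl

lemma mem_stackRun {y : ℕ} : ∀ (s xs : List ℕ), y ∈ stackRun s xs → y ∈ s ++ xs
  | s, [] => by simpa [stackRun] using fun h => Or.inl h
  | s, x :: xs => by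
    intro hy
    simp only [stackRun, List.mem_append] at hy
    rcases hy with hy | hy
    · have : y ∈ s := by
        rw [← stackPop_append_eq x s]; exact List.mem_append.mpr (Or.inl hy)
      simp [this]
    · have := mem_stackRun (x :: (stackPop x s).2) xs hy
      simp only [List.mem_append, List.mem_cons] at this
      rcases this with (rfl | hy2) | hy3
      · simp
      · have : y ∈ s := by
          rw [← stackPop_append_eq x s]; exact List.mem_append.mpr (Or.inr hy2)
        simp [this]
      · simp [hy3]

lemma stackPop_of_lt (x : ℕ) : ∀ s : List ℕ, (∀ t ∈ s, t < x) → stackPop x s = (s, [])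
  | [], _ => rfl
  | t :: ts, h => by
    have ht : t < x := h t (by simp)
    simp only [stackPop, if_pos ht, stackPop_of_lt x ts (fun u hu => h u (by simp [hu]))]

lemma stackPop_append_big (x m : ℕ) (hx : x < m) :
    ∀ s : List ℕ, stackPop x (s ++ [m]) = ((stackPop x s).1, (stackPop x s).2 ++ [m])
  | [] => by simp [stackPop, Nat.not_lt.mpr (Nat.le_of_lt hx)]
  | t :: ts => by
    simp only [List.cons_append, stackPop]
    split
    · simp [stackPop_append_big x m hx ts]
    · rfl

lemma stackRun_append_big (m : ℕ) :
    ∀ (δ s : List ℕ), (∀ t ∈ s, t < m) → (∀ t ∈ δ, t < m) →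
      stackRun (s ++ [m]) δ = stackRun s δ ++ [m]
  | [], s, _, _ => rfl
  | x :: xs, s, hs, hδ => by
    have hx : x < m := hδ x (by simp)
    simp only [stackRun, stackPop_append_big x m hx s]
    have hstack : ∀ t ∈ x :: (stackPop x s).2, t < m := by
      intro t ht
      rcases List.mem_cons.mp ht with rfl | ht
      · exact hx
      · exact hs t (by rw [← stackPop_append_eq x s]; exact List.mem_append.mpr (Or.inr ht))
    have := stackRun_append_big m xs (x :: (stackPop x s).2) hstack
      (fun u hu => hδ u (by simp [hu]))
    rw [show x :: ((stackPop x s).2 ++ [m]) = (x :: (stackPop x s).2) ++ [m] from rfl, this,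
      List.append_assoc]

lemma stackRun_split (m : ℕ) :
    ∀ (γ s δ : List ℕ), (∀ t ∈ s, t < m) → (∀ t ∈ γ, t < m) → (∀ t ∈ δ, t < m) →
      stackRun s (γ ++ m :: δ) = stackRun s γ ++ stackRun [] δ ++ [m]
  | [], s, δ, hs, _, hδ => by
    simp only [List.nil_append, stackRun, stackPop_of_lt m s hs, stackRun]
    have := stackRun_append_big m δ [] (by simp) hδ
    simp only [List.nil_append] at this
    rw [show (m :: ([] : List ℕ)) = [] ++ [m] from rfl] at *
    rw [this, List.append_assoc]
  | x :: γ, s, δ, hs, hγ, hδ => by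
    simp only [List.cons_append, stackRun, List.append_eq]
    have hstack : ∀ u ∈ x :: (stackPop x s).2, u < m := by
      intro u hu
      rcases List.mem_cons.mp hu with rfl | hu
      · exact hγ u (by simp)
      · exact hs u (by rw [← stackPop_append_eq x s]; exact List.mem_append.mpr (Or.inr hu))
    rw [stackRun_split m γ (x :: (stackPop x s).2) δ hstack
      (fun u hu => hγ u (by simp [hu])) hδ]
    simp [List.append_assoc]

lemma exists_max_of_ne_nil : ∀ (l : List ℕ), l ≠ [] → ∃ m ∈ l, ∀ x ∈ l, x ≤ m
  | [], h => absurd rfl h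
  | [x], _ => ⟨x, by simp⟩
  | x :: y :: l, _ => by
    obtain ⟨m, hm, hall⟩ := exists_max_of_ne_nil (y :: l) (by simp)
    rcases Nat.le_total x m with hxm | hmx
    · exact ⟨m, by simp [hm], by
        intro u hu
        rcases List.mem_cons.mp hu with rfl | hu
        · exact hxm
        · exact hall u hu⟩
    · exact ⟨x, by simp, by
        intro u hu
        rcases List.mem_cons.mp hu with rfl | hu
        · exact le_rfl
        · exact le_trans (hall u hu) hmx⟩

lemma memUnSvar_S : ∀ (n : ℕ) (lam : List ℕ), lam.length ≤ n → lam.Nodup →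
    MemUnSvar lam (S lam)
  | 0, lam, hl, _ => by
    have : lam = [] := List.eq_nil_of_length_eq_zero (Nat.le_zero.mp hl)
    subst this
    exact MemUnSvar.nil
  | n + 1, lam, hl, hnd => by
    rcases eq_or_ne lam [] with rfl | hne
    · exact MemUnSvar.nil
    obtain ⟨m, hm, hmax⟩ := exists_max_of_ne_nil lam hne
    obtain ⟨γ, δ, rfl⟩ := List.append_of_mem hm
    have hnd' := hnd
    simp only [List.nodup_append, List.nodup_cons, List.disjoint_cons_right] at hnd'
    obtain ⟨hγnd, ⟨hmδ, hδnd⟩, hdisj⟩ := hnd'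
    have hmγ : m ∉ γ := fun h => hdisj m h m (by simp) rfl
    have hlt : ∀ x ∈ γ ++ δ, x < m := by
      intro x hx
      rcases List.mem_append.mp hx with hx | hx
      · exact lt_of_le_of_ne (hmax x (by simp [hx])) (fun h => hmγ (h ▸ hx))
      · exact lt_of_le_of_ne (hmax x (by simp [hx])) (fun h => hmδ (h ▸ hx))
    have hltγ : ∀ x ∈ γ, x < m := fun x hx => hlt x (List.mem_append.mpr (Or.inl hx))
    have hltδ : ∀ x ∈ δ, x < m := fun x hx => hlt x (List.mem_append.mpr (Or.inr hx))
    have hS : S (γ ++ m :: δ) = S γ ++ S δ ++ [m] := by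
      unfold S
      exact stackRun_split m γ [] δ (by simp) hltγ hltδ
    have hlen : (γ ++ m :: δ).length = γ.length + δ.length + 1 := by
      simp only [List.length_append, List.length_cons]; omega
    have hγlen : γ.length ≤ n := by omega
    have hδlen : δ.length ≤ n := by omega
    have hγ := memUnSvar_S n γ hγlen hγnd
    have hδ := memUnSvar_S n δ hδlen hδnd
    have hmaxS : ∀ x ∈ S γ ++ S δ ++ ([] : List ℕ), x < m := by
      intro x hx
      simp only [List.append_nil, List.mem_append] at hx
      rcases hx with hx | hx
      · exact hltγ x (by simpa using mem_stackRun [] γ hx)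
      · exact hltδ x (by simpa using mem_stackRun [] δ hx)
    have hδ' : MemUnSvar δ (S δ ++ []) := by simpa using hδ
    have := MemUnSvar.step m (S γ) (S δ) [] γ δ hmaxS hγ hδ'
    rw [hS]
    simpa using this

/-- `unSvar(p)` contains every word `lam` with `S(lam) = p`. -/
theorem mem_unSvar_of_stackSort (lam p : List ℕ) (hnodup : lam.Nodup)
    (h : S lam = p) : MemUnSvar lam p := by
  subst h
  exact memUnSvar_S lam.length lam le_rfl hnodup
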